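/- Let H : ℝⁿ × ℝ × ℝⁿ → ℝ be C¹ and such that for every (x,u) the function p ↦ H(x,u,p) is strictly convex and even (H(x,u,p) = H(x,u,−p)). Let (x,u,p) : I → ℝⁿ × ℝ × ℝⁿ be a differentiable curve on an interval I solving the contact Hamiltonian system ẋ = ∂H/∂p(x,u,p), ṗ = −∂H/∂x(x,u,p) − (∂H/∂u)(x,u,p)·p, u̇ = ⟨∂H/∂p(x,u,p), p⟩ − H(x,u,p). If t₀ ∈ I satisfies H(x(t₀),u(t₀),p(t₀)) = 0, then u̇(t₀) ≥ 0, with u̇(t₀) = 0 if and only if p(t₀) = 0. In particular, if H vanishes along the whole trajectory, then t ↦ u(t) is nondecreasing. -/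

import Mathlib

open RealInnerProductSpace

/-- Key pointwise lemma: strictly convex even differentiable `f` with `f p = 0`, `p ≠ 0`
gives `⟪∇f p, p⟫ > 0`. -/
lemma key_inner_pos {n : ℕ} (f : EuclideanSpace ℝ (Fin n) → ℝ)
    (hf : Differentiable ℝ f)
    (hc : StrictConvexOn ℝ Set.univ f)
    (he : ∀ q, f q = f (-q))
    (p₀ : EuclideanSpace ℝ (Fin n)) (hp₀ : p₀ ≠ 0) (hf0 : f p₀ = 0) :
    0 < ⟪gradient f p₀, p₀⟫ := by
  -- f 0 < 0
  have hne : p₀ ≠ -p₀ := by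
    intro h
    apply hp₀
    have : (2 : ℝ) • p₀ = 0 := by
      rw [two_smul]
      nth_rewrite 2 [h]
      simp
    simpa using (smul_eq_zero.1 this).resolve_left (by norm_num)
  have hmid : f 0 < 0 := by
    have := hc.2 (Set.mem_univ p₀) (Set.mem_univ (-p₀)) hne
      (by norm_num : (0:ℝ) < 1/2) (by norm_num : (0:ℝ) < 1/2) (by norm_num)
    have h0 : (1/2 : ℝ) • p₀ + (1/2 : ℝ) • (-p₀) = 0 := by
      rw [smul_neg]; ring_nf; simp
    rw [h0] at this
    rw [← he p₀] at this
    rw [hf0] at this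
    simp at this
    linarith
  -- restrict to line
  set g : ℝ → ℝ := fun t => f (t • p₀) with hg
  have hgc : StrictConvexOn ℝ Set.univ g := by
    refine ⟨convex_univ, fun a _ b _ hab ta tb hta htb htab => ?_⟩
    have : (ta • a + tb • b) • p₀ = ta • (a • p₀) + tb • (b • p₀) := by
      simp [add_smul, smul_smul]
    simp only [hg, this]
    exact hc.2 (Set.mem_univ _) (Set.mem_univ _)
      (fun h => hab (by
        have := sub_eq_zero.2 h
        rw [← sub_smul] at this
        have := (smul_eq_zero.1 this).resolve_right hp₀
        linarith [sub_eq_zero.1 (by simpa using this : a - b = (0:ℝ))])) hta htb htab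
  have hgrad : HasGradientAt f (gradient f p₀) p₀ := (hf p₀).hasGradientAt
  have hfd : HasFDerivAt f ((InnerProductSpace.toDual ℝ _) (gradient f p₀)) p₀ :=
    (hasGradientAt_iff_hasFDerivAt).1 hgrad
  have hline : HasDerivAt (fun t : ℝ => t • p₀) p₀ 1 := by
    simpa using (hasDerivAt_id (1:ℝ)).smul_const p₀
  have hgd : HasDerivAt g (⟪gradient f p₀, p₀⟫) 1 := by
    have hfd' : HasFDerivAt f ((InnerProductSpace.toDual ℝ _) (gradient f p₀)) ((1:ℝ) • p₀) := by
      simpa using hfd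
    have := hfd'.comp_hasDerivAt 1 hline
    simpa [InnerProductSpace.toDual_apply_apply, hg, Function.comp_def] using this
  have := hgc.slope_lt_of_hasDerivAt (Set.mem_univ (0:ℝ)) (Set.mem_univ (1:ℝ))
    one_pos hgd
  have hslope : slope g 0 1 = f p₀ - f 0 := by
    simp [slope, hg]
  rw [hslope, hf0] at this
  linarith
/-- For a `C¹` contact Hamiltonian that is strictly convex and even in `p`, along any
solution of the contact Hamiltonian system the `u`-component has nonnegative derivative
at any time where `H` vanishes, with zero derivative exactly when `p` vanishes; in
particular, if `H` vanishes along the whole trajectory then `u` is nondecreasing. -/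
theorem contact_hamiltonian_u_monotone
    {n : ℕ}
    (H : EuclideanSpace ℝ (Fin n) × ℝ × EuclideanSpace ℝ (Fin n) → ℝ)
    (hH : ContDiff ℝ 1 H)
    (hconv : ∀ (y : EuclideanSpace ℝ (Fin n)) (w : ℝ),
      StrictConvexOn ℝ Set.univ (fun q => H (y, w, q)))
    (heven : ∀ (y : EuclideanSpace ℝ (Fin n)) (w : ℝ) (q : EuclideanSpace ℝ (Fin n)),
      H (y, w, q) = H (y, w, -q))
    (I : Set ℝ) (hI : Convex ℝ I)
    (x : ℝ → EuclideanSpace ℝ (Fin n)) (u : ℝ → ℝ)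
    (p : ℝ → EuclideanSpace ℝ (Fin n))
    (hx : ∀ t ∈ I, HasDerivWithinAt x
      (gradient (fun q => H (x t, u t, q)) (p t)) I t)
    (hp : ∀ t ∈ I, HasDerivWithinAt p
      (-gradient (fun y => H (y, u t, p t)) (x t)
        - deriv (fun w => H (x t, w, p t)) (u t) • p t) I t)
    (hu : ∀ t ∈ I, HasDerivWithinAt u
      (⟪gradient (fun q => H (x t, u t, q)) (p t), p t⟫ - H (x t, u t, p t)) I t) :
    (∀ t₀ ∈ I, H (x t₀, u t₀, p t₀) = 0 →
      0 ≤ ⟪gradient (fun q => H (x t₀, u t₀, q)) (p t₀), p t₀⟫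
          - H (x t₀, u t₀, p t₀) ∧
        (⟪gradient (fun q => H (x t₀, u t₀, q)) (p t₀), p t₀⟫
            - H (x t₀, u t₀, p t₀) = 0 ↔ p t₀ = 0)) ∧
      ((∀ t ∈ I, H (x t, u t, p t) = 0) → MonotoneOn u I) := by
  have key : ∀ t₀ ∈ I, H (x t₀, u t₀, p t₀) = 0 →
      0 ≤ ⟪gradient (fun q => H (x t₀, u t₀, q)) (p t₀), p t₀⟫
          - H (x t₀, u t₀, p t₀) ∧
        (⟪gradient (fun q => H (x t₀, u t₀, q)) (p t₀), p t₀⟫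
            - H (x t₀, u t₀, p t₀) = 0 ↔ p t₀ = 0) := by
    intro t₀ _ h0
    have hfdiff : Differentiable ℝ (fun q => H (x t₀, u t₀, q)) := by
      have : Differentiable ℝ H := hH.differentiable one_ne_zero
      exact this.comp (Differentiable.prodMk (differentiable_const _)
        (Differentiable.prodMk (differentiable_const _) differentiable_id))
    by_cases hne : p t₀ = 0
    · rw [hne] at h0 ⊢
      simp [h0]
    · have hpos := key_inner_pos (fun q => H (x t₀, u t₀, q)) hfdiff
        (hconv (x t₀) (u t₀)) (fun q => heven (x t₀) (u t₀) q) (p t₀) hne h0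
      rw [h0]
      constructor
      · linarith
      · constructor
        · intro h; linarith
        · intro h; exact absurd h hne
  refine ⟨key, fun h0all => ?_⟩
  apply monotoneOn_of_hasDerivWithinAt_nonneg hI
    (f' := fun t => ⟪gradient (fun q => H (x t, u t, q)) (p t), p t⟫ - H (x t, u t, p t))
  · exact fun t ht => (hu t ht).continuousWithinAt
  · exact fun t ht => ((hu t (interior_subset ht)).mono interior_subset)
  · exact fun t ht => (key t (interior_subset ht) (h0all t (interior_subset ht))).1
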